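/- (Incidence of a point with a plane.) Let p, q, r ∈ EuclideanSpace ℝ (Fin 3) be linearly independent and let x ∈ EuclideanSpace ℝ (Fin 3). Working in Λ = ExteriorAlgebra ℝ (EuclideanSpace ℝ (Fin 3)), the equation ι(q)*ι(r)*ι(x) − ι(p)*ι(r)*ι(x) + ι(p)*ι(q)*ι(x) = ι(p)*ι(q)*ι(r) holds if and only if there exist t, u ∈ ℝ such that x = p + t•(q − p) + u•(r − p). That is, 𝓟⌣X† = 0 for the triparavector 𝓟 representing the plane fragment through the points located at p, q, r exactly when the point located at x lies on the plane through those three points. -/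

import Mathlib

open ExteriorAlgebra

variable {R M : Type*} [CommRing R] [AddCommGroup M] [Module R M]

theorem swap3 (a b c : M) : ι R b * ι R c * ι R a = ι R a * ι R b * ι R c := by
  have h1 := ExteriorAlgebra.ι_add_mul_swap (R := R) c a
  have h2 := ExteriorAlgebra.ι_add_mul_swap (R := R) b a
  have e1 : ι R c * ι R a = - (ι R a * ι R c) := eq_neg_of_add_eq_zero_left h1
  have e2 : ι R b * ι R a = - (ι R a * ι R b) := eq_neg_of_add_eq_zero_left h2
  calc ι R b * ι R c * ι R a = ι R b * (ι R c * ι R a) := by rw [mul_assoc]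
    _ = -(ι R b * ι R a * ι R c) := by rw [e1]; noncomm_ring
    _ = ι R a * ι R b * ι R c := by rw [e2]; noncomm_ring

theorem pqr_ne (p q r : EuclideanSpace ℝ (Fin 3)) (h : LinearIndependent ℝ ![p, q, r]) :
    ι ℝ p * ι ℝ q * ι ℝ r ≠ 0 := by
  have hcard : Fintype.card (Fin 3) = Module.finrank ℝ (EuclideanSpace ℝ (Fin 3)) := by
    simp [finrank_euclideanSpace]
  let B := basisOfLinearIndependentOfCardEqFinrank h hcard
  let f : ∀ i, (EuclideanSpace ℝ (Fin 3)) [⋀^Fin i]→ₗ[ℝ] ℝ := fun i =>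
    match i with
    | 3 => B.det
    | _ => 0
  have key : liftAlternating f (ιMulti ℝ 3 ![p, q, r]) = 1 := by
    rw [liftAlternating_apply_ιMulti]
    show B.det ![p,q,r] = 1
    have : ![p,q,r] = ⇑B := by
      simp [B, coe_basisOfLinearIndependentOfCardEqFinrank]
    rw [this, Module.Basis.det_self]
  have hm : ιMulti ℝ 3 ![p, q, r] = ι ℝ p * ι ℝ q * ι ℝ r := by
    rw [ιMulti_apply]
    simp [List.ofFn_succ, mul_assoc]
  intro hz
  rw [hm, hz, map_zero] at key
  exact one_ne_zero (α := ℝ) key.symm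

theorem wedge_comb (p q r : M) (α β γ : R) :
    ι R q * ι R r * ι R (α•p+β•q+γ•r) - ι R p * ι R r * ι R (α•p+β•q+γ•r)
      + ι R p * ι R q * ι R (α•p+β•q+γ•r) = (α+β+γ) • (ι R p * ι R q * ι R r) := by
  have z1 : ι R q * ι R r * ι R q = 0 := by rw [swap3 q q r, ι_sq_zero, zero_mul]
  have z2 : ι R q * ι R r * ι R r = 0 := by rw [mul_assoc, ι_sq_zero, mul_zero]
  have z3 : ι R p * ι R r * ι R p = 0 := by rw [swap3 p p r, ι_sq_zero, zero_mul]
  have z4 : ι R p * ι R r * ι R r = 0 := by rw [mul_assoc, ι_sq_zero, mul_zero]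
  have z5 : ι R p * ι R q * ι R p = 0 := by rw [swap3 p p q, ι_sq_zero, zero_mul]
  have z6 : ι R p * ι R q * ι R q = 0 := by rw [mul_assoc, ι_sq_zero, mul_zero]
  have s1 : ι R q * ι R r * ι R p = ι R p * ι R q * ι R r := swap3 p q r
  have s2 : ι R p * ι R r * ι R q = -(ι R p * ι R q * ι R r) := by
    rw [mul_assoc, eq_neg_of_add_eq_zero_left (ι_add_mul_swap r q), mul_neg, mul_assoc]
  simp only [map_add, map_smul, mul_add, mul_smul_comm, z1, z2, z3, z4, z5, z6, s1, s2,
    smul_zero, add_zero, zero_add, smul_neg]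
  module

/-- incidence of a point with a plane. For linearly independent
`p`, `q`, `r`, the triparavector equation `𝓟⌣X† = 0`, i.e.
`q∧r∧x − p∧r∧x + p∧q∧x = p∧q∧r`, holds exactly when `x` lies on the plane
through the points located at `p`, `q` and `r`. -/
theorem point_on_plane_iff (p q r x : EuclideanSpace ℝ (Fin 3))
    (h : LinearIndependent ℝ ![p, q, r]) :
    (ExteriorAlgebra.ι ℝ q * ExteriorAlgebra.ι ℝ r * ExteriorAlgebra.ι ℝ x -
          ExteriorAlgebra.ι ℝ p * ExteriorAlgebra.ι ℝ r * ExteriorAlgebra.ι ℝ x +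
          ExteriorAlgebra.ι ℝ p * ExteriorAlgebra.ι ℝ q * ExteriorAlgebra.ι ℝ x
        = ExteriorAlgebra.ι ℝ p * ExteriorAlgebra.ι ℝ q * ExteriorAlgebra.ι ℝ r) ↔
      ∃ t u : ℝ, x = p + t • (q - p) + u • (r - p) := by
  have hpqr := pqr_ne p q r h
  constructor
  · intro heq
    have hcard : Fintype.card (Fin 3) = Module.finrank ℝ (EuclideanSpace ℝ (Fin 3)) := by
      simp [finrank_euclideanSpace]
    let B := basisOfLinearIndependentOfCardEqFinrank h hcard
    have hB : ⇑B = ![p, q, r] := coe_basisOfLinearIndependentOfCardEqFinrank h hcard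
    set α := B.repr x 0 with hα
    set β := B.repr x 1 with hβ
    set γ := B.repr x 2 with hγ
    have hx : x = α • p + β • q + γ • r := by
      have := B.sum_repr x
      rw [Fin.sum_univ_three, hB] at this
      simp only [Matrix.cons_val_zero, Matrix.cons_val_one, Matrix.head_cons,
        Matrix.cons_val_two, Matrix.tail_cons] at this
      linear_combination (norm := module) this.symm
    rw [hx, wedge_comb] at heq
    have hsum : α + β + γ = 1 := by
      have h0 : (α + β + γ - 1) • (ExteriorAlgebra.ι ℝ p * ExteriorAlgebra.ι ℝ q *
          ExteriorAlgebra.ι ℝ r) = 0 := by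
        rw [sub_smul, one_smul, heq, sub_self]
      rcases smul_eq_zero.mp h0 with h1 | h1
      · linarith [sub_eq_zero.mp (by linarith [h1] : α + β + γ - 1 = 0)]
      · exact absurd h1 hpqr
    refine ⟨β, γ, ?_⟩
    rw [hx]
    have : α = 1 - β - γ := by linarith
    rw [this]
    module
  · rintro ⟨t, u, rfl⟩
    have hrw : p + t • (q - p) + u • (r - p) = (1 - t - u) • p + t • q + u • r := by module
    rw [hrw, wedge_comb]
    rw [show (1 - t - u + t + u : ℝ) = 1 by ring, one_smul]
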